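/- Let X and Z be measurable spaces, and let P, Q be probability measures on X × Bool. Let g : X → Z be a measurable marginal invariant transformation, i.e. P.map (g ∘ Prod.fst) = Q.map (g ∘ Prod.fst), and suppose label shift exists, i.e. P.map Prod.snd ≠ Q.map Prod.snd. Then for every measurable hypothesis h : Z → Bool, the joint error is strictly positive: P({(x, y) | h(g(x)) ≠ y}) + Q({(x, y) | h(g(x)) ≠ y}) > 0. -/

import Mathlib

open MeasureTheory

/-- **Remark 1**: under label shift, a marginal invariant transformation never admits a
hypothesis with zero joint error on both domains. -/
theorem marginal_invariant_positive_joint_error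
    {X Z : Type*} [MeasurableSpace X] [MeasurableSpace Z]
    (P Q : Measure (X × Bool)) [IsProbabilityMeasure P] [IsProbabilityMeasure Q]
    (g : X → Z) (hg : Measurable g)
    (hmar : P.map (g ∘ Prod.fst) = Q.map (g ∘ Prod.fst))
    (hlabel : P.map Prod.snd ≠ Q.map Prod.snd)
    (h : Z → Bool) (hh : Measurable h) :
    0 < P {xy | h (g xy.1) ≠ xy.2} + Q {xy | h (g xy.1) ≠ xy.2} := by
  by_contra hc
  push_neg at hc
  have hle := le_antisymm hc zero_le
  have hP0 : P {xy | h (g xy.1) ≠ xy.2} = 0 := by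
    have := add_eq_zero.mp hle
    exact this.1
  have hQ0 : Q {xy | h (g xy.1) ≠ xy.2} = 0 := (add_eq_zero.mp hle).2
  have haeP : (fun xy : X × Bool => h (g xy.1)) =ᵐ[P] Prod.snd := hP0
  have haeQ : (fun xy : X × Bool => h (g xy.1)) =ᵐ[Q] Prod.snd := hQ0
  have hmeas : Measurable (fun xy : X × Bool => h (g xy.1)) :=
    (hh.comp (hg.comp measurable_fst))
  have h1 : P.map Prod.snd = P.map (fun xy : X × Bool => h (g xy.1)) :=
    (Measure.map_congr haeP).symm
  have h2 : Q.map Prod.snd = Q.map (fun xy : X × Bool => h (g xy.1)) :=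
    (Measure.map_congr haeQ).symm
  have h3 : P.map (fun xy : X × Bool => h (g xy.1)) =
      Q.map (fun xy : X × Bool => h (g xy.1)) := by
    have hP : P.map (fun xy : X × Bool => h (g xy.1)) = (P.map (g ∘ Prod.fst)).map h := by
      rw [Measure.map_map hh (hg.comp measurable_fst)]
      rfl
    have hQ : Q.map (fun xy : X × Bool => h (g xy.1)) = (Q.map (g ∘ Prod.fst)).map h := by
      rw [Measure.map_map hh (hg.comp measurable_fst)]
      rfl
    rw [hP, hQ, hmar]
  exact hlabel (h1.trans (h3.trans h2.symm))
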